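/- Let ℓ₁, k₁, k be integers with 0 ≤ ℓ₁ ≤ k₁ < k, and let n = ∏_{j=1}^{k} p_j^{a_j} where the p_j are pairwise distinct primes, the a_j are positive integers, and p_{k₁+1} < p_{k₁+2} < ⋯ < p_k. Let b_{ℓ₁+1}, …, b_{k₁} be positive integers with a_j ≥ b_j for ℓ₁ < j ≤ k₁. Let t_min and t_max be positive real numbers with t_min ≤ σ₋₁(n) ≤ t_max, and set M = t_max / ((∏_{j=1}^{ℓ₁} σ₋₁(p_j^{a_j})) · (∏_{j=ℓ₁+1}^{k₁} σ₋₁(p_j^{b_j}))). Then M > 1 and 1/(M − 1) ≤ p_{k₁+1}. -/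

import Mathlib

open ArithmeticFunction
open scoped ArithmeticFunction.sigma

private lemma sigma_pow_succ (p m : ℕ) (hp : p.Prime) :
    σ 1 (p ^ (m + 1)) = p * σ 1 (p ^ m) + 1 := by
  rw [sigma_one_apply_prime_pow hp, sigma_one_apply_prime_pow hp,
    Finset.sum_range_succ' (fun k => p ^ k)]
  simp [pow_succ, Finset.mul_sum, mul_comm, add_comm]

private lemma ratio_mono (p : ℕ) (hp : p.Prime) {b e : ℕ} (hbe : b ≤ e) :
    (σ 1 (p ^ b) : ℝ) / (p ^ b : ℕ) ≤ (σ 1 (p ^ e) : ℝ) / (p ^ e : ℕ) := by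
  induction e, hbe using Nat.le_induction with
  | base => exact le_refl _
  | succ m hm ih =>
    refine ih.trans ?_
    have hpr : (0:ℝ) < (p:ℝ) := by exact_mod_cast hp.pos
    have hp0 : (0:ℝ) < (p:ℝ) ^ m := pow_pos hpr m
    have hp1 : (0:ℝ) < (p:ℝ) ^ (m+1) := pow_pos hpr (m+1)
    rw [Nat.cast_pow, Nat.cast_pow, div_le_div_iff₀ hp0 hp1, sigma_pow_succ p m hp]
    push_cast
    ring_nf
    nlinarith [pow_pos (show (0:ℝ) < p by exact_mod_cast hp.pos) m]

private lemma one_le_ratio (p e : ℕ) (hp : p.Prime) :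
    1 ≤ (σ 1 (p ^ e) : ℝ) / (p ^ e : ℕ) := by
  have h := ratio_mono p hp (Nat.zero_le e)
  have h0 : σ 1 (p ^ 0) = 1 := by simp [sigma_one_apply]
  rw [h0] at h
  simpa using h

private lemma ratio_lb (p e : ℕ) (hp : p.Prime) (he : 1 ≤ e) :
    1 + 1 / (p : ℝ) ≤ (σ 1 (p ^ e) : ℝ) / (p ^ e : ℕ) := by
  have h := ratio_mono p hp he
  have hσ : σ 1 (p ^ 1) = 1 + p := by
    rw [sigma_one_apply_prime_pow hp]; simp [Finset.sum_range_succ]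
  have hp0 : (0:ℝ) < p := by exact_mod_cast hp.pos
  rw [hσ] at h
  refine le_trans (le_of_eq ?_) h
  push_cast
  field_simp
  ring

theorem bounds_on_smallest_unknown_prime_a
    (l1 k1 k : ℕ) (hl1k1 : l1 ≤ k1) (hk1k : k1 < k)
    (p a b : ℕ → ℕ)
    (hp : ∀ j ∈ Finset.Icc 1 k, (p j).Prime)
    (hdist : ∀ i ∈ Finset.Icc 1 k, ∀ j ∈ Finset.Icc 1 k, i ≠ j → p i ≠ p j)
    (ha : ∀ j ∈ Finset.Icc 1 k, 0 < a j)
    (hsorted : ∀ i j : ℕ, k1 + 1 ≤ i → i < j → j ≤ k → p i < p j)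
    (hb : ∀ j : ℕ, l1 < j → j ≤ k1 → 0 < b j ∧ b j ≤ a j)
    (n : ℕ) (hn : n = ∏ j ∈ Finset.Icc 1 k, p j ^ a j)
    (tmin tmax : ℝ) (htmin : 0 < tmin) (htmax : 0 < tmax)
    (hlow : tmin ≤ (σ 1 n : ℝ) / n) (hhigh : (σ 1 n : ℝ) / n ≤ tmax)
    (M : ℝ)
    (hM : M = tmax /
      ((∏ j ∈ Finset.Icc 1 l1, (σ 1 (p j ^ a j) : ℝ) / (p j ^ a j : ℕ)) *
       (∏ j ∈ Finset.Icc (l1 + 1) k1, (σ 1 (p j ^ b j) : ℝ) / (p j ^ b j : ℕ)))) :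
    1 < M ∧ 1 / (M - 1) ≤ p (k1 + 1) := by
  set f : ℕ → ℝ := fun j => (σ 1 (p j ^ a j) : ℝ) / (p j ^ a j : ℕ) with hf
  set g : ℕ → ℝ := fun j => (σ 1 (p j ^ b j) : ℝ) / (p j ^ b j : ℕ) with hg
  -- one ≤ f on Icc 1 k
  have hf1 : ∀ j ∈ Finset.Icc 1 k, 1 ≤ f j := fun j hj => one_le_ratio _ _ (hp j hj)
  -- the key product identity
  have hcop : ((Finset.Icc 1 k : Finset ℕ) : Set ℕ).Pairwise
      (Function.onFun Nat.Coprime fun j => p j ^ a j) := by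
    intro i hi j hj hij
    simp only [Finset.coe_Icc, Set.mem_Icc] at hi hj
    have hi' : i ∈ Finset.Icc 1 k := Finset.mem_Icc.mpr hi
    have hj' : j ∈ Finset.Icc 1 k := Finset.mem_Icc.mpr hj
    simp only [Function.onFun]
    exact Nat.Coprime.pow _ _ ((Nat.coprime_primes (hp i hi') (hp j hj')).mpr
      (hdist i hi' j hj' hij))
  have hsig : (σ 1 n : ℝ) = ∏ j ∈ Finset.Icc 1 k, (σ 1 (p j ^ a j) : ℝ) := by
    rw [hn, ArithmeticFunction.IsMultiplicative.map_prod _ isMultiplicative_sigma _ hcop]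
    push_cast; rfl
  have hnprod : (n : ℝ) = ∏ j ∈ Finset.Icc 1 k, ((p j ^ a j : ℕ) : ℝ) := by
    rw [hn]; push_cast; rfl
  have hratio : (σ 1 n : ℝ) / n = ∏ j ∈ Finset.Icc 1 k, f j := by
    rw [hsig, hnprod, ← Finset.prod_div_distrib]
  -- split products
  have hsplit1 : (∏ j ∈ Finset.Icc 1 l1, f j) * ∏ j ∈ Finset.Icc (l1+1) k1, f j
      = ∏ j ∈ Finset.Icc 1 k1, f j := by
    rw [show Finset.Icc 1 l1 = Finset.Ioc 0 l1 from (Finset.Icc_add_one_left_eq_Ioc 0 l1),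
      Finset.Icc_add_one_left_eq_Ioc, show Finset.Icc 1 k1 = Finset.Ioc 0 k1 from (Finset.Icc_add_one_left_eq_Ioc 0 k1)]
    exact Finset.prod_Ioc_consecutive f (Nat.zero_le l1) hl1k1
  have hsplit2 : (∏ j ∈ Finset.Icc 1 k1, f j) * ∏ j ∈ Finset.Icc (k1+1) k, f j
      = ∏ j ∈ Finset.Icc 1 k, f j := by
    rw [show Finset.Icc 1 k1 = Finset.Ioc 0 k1 from (Finset.Icc_add_one_left_eq_Ioc 0 k1),
      Finset.Icc_add_one_left_eq_Ioc, show Finset.Icc 1 k = Finset.Ioc 0 k from (Finset.Icc_add_one_left_eq_Ioc 0 k)]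
    exact Finset.prod_Ioc_consecutive f (Nat.zero_le k1) hk1k.le
  -- positivity / bounds for the denominator
  have hDle : (∏ j ∈ Finset.Icc 1 l1, f j) * ∏ j ∈ Finset.Icc (l1+1) k1, g j
      ≤ ∏ j ∈ Finset.Icc 1 k1, f j := by
    rw [← hsplit1]
    refine mul_le_mul_of_nonneg_left ?_ ?_
    · refine Finset.prod_le_prod ?_ ?_
      · intro j hj; positivity
      · intro j hj
        rw [Finset.mem_Icc] at hj
        have hjk : j ∈ Finset.Icc 1 k := Finset.mem_Icc.mpr ⟨by omega, by omega⟩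
        exact ratio_mono _ (hp j hjk) (hb j (by omega) hj.2).2
    · refine Finset.prod_nonneg fun j hj => ?_; positivity
  have hDpos : 0 < (∏ j ∈ Finset.Icc 1 l1, f j) * ∏ j ∈ Finset.Icc (l1+1) k1, g j := by
    refine mul_pos (Finset.prod_pos fun j hj => ?_) (Finset.prod_pos fun j hj => ?_) <;>
    · rw [Finset.mem_Icc] at hj
      have hjk : j ∈ Finset.Icc 1 k := Finset.mem_Icc.mpr ⟨by omega, by omega⟩
      exact lt_of_lt_of_le one_pos (one_le_ratio _ _ (hp j hjk))
  set D := (∏ j ∈ Finset.Icc 1 l1, f j) * ∏ j ∈ Finset.Icc (l1+1) k1, g j with hD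
  -- the prime p (k1+1)
  have hk1mem : k1 + 1 ∈ Finset.Icc 1 k := Finset.mem_Icc.mpr ⟨by omega, by omega⟩
  have hpk : (p (k1+1)).Prime := hp _ hk1mem
  have hPpos : (0:ℝ) < p (k1+1) := by exact_mod_cast hpk.pos
  -- tail bound
  have htail : 1 + 1 / (p (k1+1) : ℝ) ≤ ∏ j ∈ Finset.Icc (k1+1) k, f j := by
    refine le_trans (ratio_lb _ _ hpk (ha _ hk1mem)) ?_
    have hmem' : k1 + 1 ∈ Finset.Icc (k1+1) k := Finset.mem_Icc.mpr ⟨le_rfl, hk1k⟩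
    have hrest : (1:ℝ) ≤ ∏ j ∈ (Finset.Icc (k1+1) k).erase (k1+1), f j := by
      calc (1:ℝ) = ∏ _j ∈ (Finset.Icc (k1+1) k).erase (k1+1), (1:ℝ) :=
            Finset.prod_const_one.symm
        _ ≤ _ := by
            refine Finset.prod_le_prod (fun i _ => zero_le_one) (fun j hj => ?_)
            have hj' := Finset.mem_of_mem_erase hj
            rw [Finset.mem_Icc] at hj'
            exact hf1 j (Finset.mem_Icc.mpr ⟨by omega, hj'.2⟩)
    rw [← Finset.mul_prod_erase _ f hmem']
    exact le_mul_of_one_le_right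
      (le_trans zero_le_one (hf1 _ hk1mem)) hrest
  -- main bound : D * (1 + 1/p) ≤ tmax
  have hmain : D * (1 + 1 / (p (k1+1) : ℝ)) ≤ tmax := by
    refine le_trans ?_ hhigh
    rw [hratio, ← hsplit2]
    refine mul_le_mul hDle htail (by positivity) ?_
    refine Finset.prod_nonneg fun j hj => ?_
    exact le_trans zero_le_one (hf1 j (by rw [Finset.mem_Icc] at hj ⊢; omega))
  have hMge : 1 + 1 / (p (k1+1) : ℝ) ≤ M := by
    rw [hM, le_div_iff₀ hDpos]
    calc (1 + 1 / (p (k1+1) : ℝ)) * D = D * (1 + 1 / (p (k1+1) : ℝ)) := by ring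
    _ ≤ tmax := hmain
  have hinv : (0:ℝ) < 1 / (p (k1+1) : ℝ) := by positivity
  constructor
  · linarith
  · have hM1 : 1 / (p (k1+1) : ℝ) ≤ M - 1 := by linarith
    calc 1 / (M - 1) ≤ 1 / (1 / (p (k1+1) : ℝ)) := one_div_le_one_div_of_le hinv hM1
    _ = p (k1+1) := one_div_one_div _
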